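/- Let (Ω, F, μ) be a probability space with a filtration 𝒻 indexed by ℕ, let T be a finite horizon, and let Z : ℕ → Ω → ℝ be an adapted process with each Z t bounded and measurable. Define the Snell envelope U by backward recursion: U T = Z T and U t = max(Z t, μ[U (t+1) | 𝒻 t]) for t < T. Then for every t ≤ T and every stopping time τ (with respect to 𝒻) satisfying t ≤ τ ≤ T almost surely, μ[Z_τ | 𝒻 t] ≤ U t almost everywhere, where Z_τ(ω) = Z (τ ω) ω is the payoff at the stopping time. -/

import Mathlib

open MeasureTheory

section Aux

variable {Ω : Type*} {mΩ : MeasurableSpace Ω} {μ : Measure Ω} [IsProbabilityMeasure μ]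

lemma snell_aux {𝒻 : Filtration ℕ mΩ} {T : ℕ} {Z : ℕ → Ω → ℝ}
    (hadapt : Adapted 𝒻 Z)
    (hmeas : ∀ t, Measurable (Z t))
    (hbdd : ∀ t, ∃ C : ℝ, ∀ ω, |Z t ω| ≤ C)
    (U : ℕ → Ω → ℝ)
    (hUT : U T = Z T)
    (hU : ∀ t < T, U t = fun ω => max (Z t ω) ((μ[U (t + 1) | 𝒻 t]) ω)) :
    ∀ d t, t + d = T → ∀ τ : Ω → ℕ, IsStoppingTime 𝒻 (fun ω => (τ ω : WithTop ℕ)) →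
      (∀ᵐ ω ∂μ, t ≤ τ ω) → (∀ᵐ ω ∂μ, τ ω ≤ T) →
      ∀ᵐ ω ∂μ, (μ[fun ω' => Z (τ ω') ω' | 𝒻 t]) ω ≤ U t ω := by
  classical
  obtain ⟨C, hC⟩ := Classical.axiomOfChoice hbdd
  -- integrability of Z s
  have hZint : ∀ s, Integrable (Z s) μ := fun s =>
    (integrable_const (C s)).mono' (hmeas s).aestronglyMeasurable
      (Filter.Eventually.of_forall fun ω => by simpa [Real.norm_eq_abs] using hC s ω)
  -- integrability of U s for s + d = T
  have hUint : ∀ d s, s + d = T → Integrable (U s) μ := by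
    intro d
    induction d with
    | zero => intro s hs; rw [show s = T by omega, hUT]; exact hZint T
    | succ n _ =>
      intro s hs
      have hsT : s < T := by omega
      rw [hU s hsT]
      exact (hZint s).sup integrable_condExp
  -- integrability of stopped values
  have hstopm : ∀ τ : Ω → ℕ, IsStoppingTime 𝒻 (fun ω => (τ ω : WithTop ℕ)) → Measurable (fun ω => Z (τ ω) ω) := by
    intro τ hτ
    have hτm : Measurable τ :=
      measurable_to_countable' fun n => 𝒻.le n _ (by have h := hτ.measurableSet_eq_of_countable n; show MeasurableSet[𝒻 n] {ω | τ ω = n}; simpa using h)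
    have hp : Measurable (fun p : Ω × ℕ => Z p.2 p.1) :=
      measurable_from_prod_countable_left fun n => hmeas n
    exact hp.comp (measurable_id.prodMk hτm)
  have hstop : ∀ τ : Ω → ℕ, IsStoppingTime 𝒻 (fun ω => (τ ω : WithTop ℕ)) → (∀ᵐ ω ∂μ, τ ω ≤ T) →
      Integrable (fun ω => Z (τ ω) ω) μ := by
    intro τ hτ hle
    set B : ℝ := (Finset.range (T + 1)).sup' (Finset.nonempty_range_iff.mpr (Nat.succ_ne_zero T)) C
    refine (integrable_const B).mono' (hstopm τ hτ).aestronglyMeasurable ?_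
    filter_upwards [hle] with ω hω
    calc ‖Z (τ ω) ω‖ ≤ C (τ ω) := by simpa [Real.norm_eq_abs] using hC (τ ω) ω
      _ ≤ B := Finset.le_sup' C (Finset.mem_range.mpr (by omega))
  -- main induction on the gap d
  intro d
  induction d with
  | zero =>
    intro t htT τ hτ hge hle
    simp only [Nat.add_zero] at htT; subst htT
    have hτt : ∀ᵐ ω ∂μ, τ ω = t := by
      filter_upwards [hge, hle] with ω h1 h2; omega
    have h1 : (fun ω' => Z (τ ω') ω') =ᵐ[μ] Z t := by
      filter_upwards [hτt] with ω hω; rw [hω]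
    have h2 : μ[fun ω' => Z (τ ω') ω' | 𝒻 t] =ᵐ[μ] μ[Z t | 𝒻 t] := condExp_congr_ae h1
    have h3 : μ[Z t | 𝒻 t] = Z t :=
      condExp_of_stronglyMeasurable (𝒻.le t) (hadapt t).stronglyMeasurable (hZint t)
    filter_upwards [h2] with ω hω
    rw [hω, h3, hUT]
  | succ n ih =>
    intro t htT τ hτ hge hle
    have htT' : t < T := by omega
    -- the set where τ ≤ t (a.e. τ = t)
    set A : Set Ω := {ω | τ ω ≤ t} with hA
    have hA_meas : MeasurableSet[𝒻 t] A := by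
      have h := hτ.measurableSet_le t; rw [hA]; simpa using h
    -- the shifted stopping time
    set τ' : Ω → ℕ := fun ω => max (τ ω) (t + 1) with hτ'def
    have hτ' : IsStoppingTime 𝒻 (fun ω => (τ' ω : WithTop ℕ)) := by
      intro i; have h := hτ.max (isStoppingTime_const 𝒻 (t + 1)) i
      convert h using 3 with ω
      simp only [hτ'def, max_le_iff]
      norm_cast
      simp
    have hτ'_ge : ∀ᵐ ω ∂μ, t + 1 ≤ τ' ω :=
      Filter.Eventually.of_forall fun ω => le_max_right _ _
    have hτ'_le : ∀ᵐ ω ∂μ, τ' ω ≤ T := by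
      filter_upwards [hle] with ω hω
      exact max_le hω (by omega)
    -- inductive hypothesis at t+1
    have hIH := ih (t + 1) (by omega) τ' hτ' hτ'_ge hτ'_le
    -- decomposition of the stopped value
    have hdecomp : (fun ω' => Z (τ ω') ω') =ᵐ[μ]
        (fun ω' => A.indicator (Z t) ω' + Aᶜ.indicator (fun ω'' => Z (τ' ω'') ω'') ω') := by
      filter_upwards [hge, hle] with ω h1 _
      by_cases hω : ω ∈ A
      · have : τ ω = t := le_antisymm hω h1
        simp [Set.indicator_of_mem hω, Set.indicator_of_notMem (by simp [hω] : ω ∉ Aᶜ), this]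
      · have h2 : t + 1 ≤ τ ω := by
          simp only [hA, Set.mem_setOf_eq, not_le] at hω; omega
        have : τ' ω = τ ω := max_eq_left h2
        simp [Set.indicator_of_notMem hω, Set.indicator_of_mem (Set.mem_compl hω), this]
    -- integrability pieces
    have hZt_ind : Integrable (A.indicator (Z t)) μ :=
      (hZint t).indicator (𝒻.le t _ hA_meas)
    have hstopτ' : Integrable (fun ω => Z (τ' ω) ω) μ := hstop τ' hτ' hτ'_le
    have hZτ'_ind : Integrable (Aᶜ.indicator (fun ω => Z (τ' ω) ω)) μ :=
      hstopτ'.indicator (𝒻.le t _ hA_meas.compl)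
    -- conditional expectation computation
    have hce1 : μ[fun ω' => Z (τ ω') ω' | 𝒻 t]
        =ᵐ[μ] μ[(fun ω' => A.indicator (Z t) ω' + Aᶜ.indicator (fun ω'' => Z (τ' ω'') ω'') ω') | 𝒻 t] :=
      condExp_congr_ae hdecomp
    have hce2 : μ[(fun ω' => A.indicator (Z t) ω' + Aᶜ.indicator (fun ω'' => Z (τ' ω'') ω'') ω') | 𝒻 t]
        =ᵐ[μ] μ[A.indicator (Z t) | 𝒻 t] + μ[Aᶜ.indicator (fun ω'' => Z (τ' ω'') ω'') | 𝒻 t] :=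
      condExp_add hZt_ind hZτ'_ind _
    have hce3 : μ[A.indicator (Z t) | 𝒻 t] = A.indicator (Z t) :=
      condExp_of_stronglyMeasurable (𝒻.le t)
        ((hadapt t).indicator hA_meas).stronglyMeasurable hZt_ind
    have hce4 : μ[Aᶜ.indicator (fun ω'' => Z (τ' ω'') ω'') | 𝒻 t]
        =ᵐ[μ] Aᶜ.indicator (μ[fun ω'' => Z (τ' ω'') ω'' | 𝒻 t]) :=
      condExp_indicator hstopτ' hA_meas.compl
    -- tower property and monotonicity
    have htower : μ[fun ω'' => Z (τ' ω'') ω'' | 𝒻 t]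
        =ᵐ[μ] μ[μ[fun ω'' => Z (τ' ω'') ω'' | 𝒻 (t + 1)] | 𝒻 t] :=
      (condExp_condExp_of_le (𝒻.mono (Nat.le_succ t)) (𝒻.le (t + 1))).symm
    have hmono : μ[μ[fun ω'' => Z (τ' ω'') ω'' | 𝒻 (t + 1)] | 𝒻 t]
        ≤ᵐ[μ] μ[U (t + 1) | 𝒻 t] :=
      condExp_mono integrable_condExp (hUint n (t + 1) (by omega)) hIH
    -- pointwise bounds from the Snell recursion
    have hZle : ∀ ω, Z t ω ≤ U t ω := by
      intro ω; rw [hU t htT']; exact le_max_left _ _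
    have hCle : ∀ ω, (μ[U (t + 1) | 𝒻 t]) ω ≤ U t ω := by
      intro ω; rw [hU t htT']; exact le_max_right _ _
    -- combine
    filter_upwards [hce1, hce2, hce4, htower, hmono] with ω h1 h2 h4 h5 h6
    rw [h1, h2]
    simp only [Pi.add_apply]
    rw [hce3, h4]
    by_cases hω : ω ∈ A
    · rw [Set.indicator_of_mem hω, Set.indicator_of_notMem (by simp [hω] : ω ∉ Aᶜ)]
      simpa using hZle ω
    · rw [Set.indicator_of_notMem hω, Set.indicator_of_mem (Set.mem_compl hω)]
      have : (μ[fun ω'' => Z (τ' ω'') ω'' | 𝒻 t]) ω ≤ U t ω := by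
        rw [h5]; exact le_trans h6 (hCle ω)
      simpa using this

end Aux

/-- The Snell envelope dominates the conditional expected payoff of every stopping time:
for any stopping time `τ` with `t ≤ τ ≤ T` a.s., `μ[Z_τ | 𝒻 t] ≤ U t` a.e. -/
theorem stmt4 {Ω : Type*} {mΩ : MeasurableSpace Ω} {μ : Measure Ω} [IsProbabilityMeasure μ]
    (𝒻 : Filtration ℕ mΩ) (T : ℕ) (Z : ℕ → Ω → ℝ)
    (hadapt : Adapted 𝒻 Z)
    (hmeas : ∀ t, Measurable (Z t))
    (hbdd : ∀ t, ∃ C : ℝ, ∀ ω, |Z t ω| ≤ C)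
    (U : ℕ → Ω → ℝ)
    (hUT : U T = Z T)
    (hU : ∀ t < T, U t = fun ω => max (Z t ω) ((μ[U (t + 1) | 𝒻 t]) ω))
    (t : ℕ) (ht : t ≤ T)
    (τ : Ω → ℕ) (hτ : IsStoppingTime 𝒻 (fun ω => (τ ω : WithTop ℕ)))
    (hτ_ge : ∀ᵐ ω ∂μ, t ≤ τ ω) (hτ_le : ∀ᵐ ω ∂μ, τ ω ≤ T) :
    ∀ᵐ ω ∂μ, (μ[fun ω' => Z (τ ω') ω' | 𝒻 t]) ω ≤ U t ω := by
  exact snell_aux hadapt hmeas hbdd U hUT hU (T - t) t (by omega) τ hτ hτ_ge hτ_le
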